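/- Let r be a positive integer, L ≥ 4 a real, and n_1, …, n_r positive reals satisfying n_{i+1} ≤ (3/4)·n_i for all 1 ≤ i < r. Let B_1, …, B_r be pairwise-disjoint finite subsets of a set Z, and let G_1, …, G_r be finite subsets of Z such that |B_i| ≤ n_i/(100L) and |G_i| ≥ n_i/100 for every i. Then there exists an injective map ψ : B_1 ∪ ⋯ ∪ B_r → G_1 ∪ ⋯ ∪ G_r such that ψ(b) ∈ G_i whenever b ∈ B_i. -/

import Mathlib

/-- Good-mapping lemma: let `r ≥ 1`, `L ≥ 4`, and `n_0, …, n_{r-1}` positive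
reals with `n_{i+1} ≤ (3/4)·n_i`. Let `B_0, …, B_{r-1}` be pairwise-disjoint
finite subsets of `Z` and `G_0, …, G_{r-1}` finite subsets of `Z` with
`|B_i| ≤ n_i/(100L)` and `|G_i| ≥ n_i/100` for each `i < r`. Then there is an
injective map `ψ` from `B_0 ∪ ⋯ ∪ B_{r-1}` to `G_0 ∪ ⋯ ∪ G_{r-1}` with
`ψ(b) ∈ G_i` whenever `b ∈ B_i`. -/
theorem stmt6 {Z : Type*} [DecidableEq Z] (r : ℕ) (hr : 1 ≤ r)
    (L : ℝ) (hL : 4 ≤ L)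
    (nn : ℕ → ℝ) (hpos : ∀ i < r, 0 < nn i)
    (hdec : ∀ i, i + 1 < r → nn (i + 1) ≤ (3 / 4) * nn i)
    (B G : ℕ → Finset Z)
    (hdisj : ∀ i < r, ∀ j < r, i ≠ j → Disjoint (B i) (B j))
    (hB : ∀ i < r, ((B i).card : ℝ) ≤ nn i / (100 * L))
    (hG : ∀ i < r, nn i / 100 ≤ ((G i).card : ℝ)) :
    ∃ ψ : Z → Z,
      Set.InjOn ψ ↑((Finset.range r).biUnion B) ∧
      ∀ i < r, ∀ b ∈ B i, ψ b ∈ G i := by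
  rcases isEmpty_or_nonempty Z with hZ | hZ
  · exact ⟨id, fun x _ y _ _ => (IsEmpty.false x).elim,
      fun i _ b _ => (IsEmpty.false b).elim⟩
  -- geometric decay of nn
  have hpow : ∀ i, ∀ j, i ≤ j → j < r → nn j ≤ (3/4 : ℝ)^(j - i) * nn i := by
    intro i j hij
    induction j, hij using Nat.le_induction with
    | base => intro _; simp
    | succ j hij ih =>
      intro hjr
      have hj : j < r := Nat.lt_of_succ_lt hjr
      have h1 := hdec j hjr
      have h2 := ih hj
      have : nn (j + 1) ≤ (3/4 : ℝ) * ((3/4 : ℝ)^(j - i) * nn i) := by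
        refine h1.trans ?_
        have : (0:ℝ) ≤ 3/4 := by norm_num
        nlinarith
      calc nn (j + 1) ≤ (3/4 : ℝ) * ((3/4 : ℝ)^(j - i) * nn i) := this
        _ = (3/4 : ℝ)^(j - i + 1) * nn i := by ring
        _ = (3/4 : ℝ)^(j + 1 - i) * nn i := by
            rw [Nat.succ_sub hij]
  -- geometric sum bound
  have hsum : ∀ i, i < r → ∑ j ∈ Finset.Ico (i+1) r, nn j ≤ 3 * nn i := by
    intro i hi
    have h1 : ∑ j ∈ Finset.Ico (i+1) r, nn j
        ≤ ∑ j ∈ Finset.Ico (i+1) r, (3/4 : ℝ)^(j - i) * nn i := by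
      refine Finset.sum_le_sum fun j hj => ?_
      rw [Finset.mem_Ico] at hj
      exact hpow i j (le_of_lt hj.1) hj.2
    have h2 : ∑ j ∈ Finset.Ico (i+1) r, (3/4 : ℝ)^(j - i)
        = ∑ k ∈ Finset.range (r - (i+1)), (3/4 : ℝ)^(k + 1) := by
      rw [Finset.sum_Ico_eq_sum_range]
      refine Finset.sum_congr rfl fun k _ => ?_
      congr 1
      omega
    have h3 : ∑ k ∈ Finset.range (r - (i+1)), (3/4 : ℝ)^(k+1) ≤ 3 := by
      have : ∑ k ∈ Finset.range (r - (i+1)), (3/4 : ℝ)^(k+1)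
          = (3/4) * ∑ k ∈ Finset.range (r - (i+1)), (3/4 : ℝ)^k := by
        rw [Finset.mul_sum]
        exact Finset.sum_congr rfl fun k _ => by ring
      rw [this]
      have h4 : ∑ k ∈ Finset.range (r - (i+1)), (3/4:ℝ)^k ≤ 4 := by
        rw [geom_sum_eq (by norm_num)]
        have h5 : (0:ℝ) ≤ (3/4:ℝ)^(r - (i+1)) := by positivity
        rw [div_le_iff_of_neg (by norm_num)]
        linarith
      linarith
    have hni := hpos i hi
    calc ∑ j ∈ Finset.Ico (i+1) r, nn j
        ≤ ∑ j ∈ Finset.Ico (i+1) r, (3/4 : ℝ)^(j - i) * nn i := h1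
      _ = (∑ j ∈ Finset.Ico (i+1) r, (3/4 : ℝ)^(j - i)) * nn i := by
          rw [Finset.sum_mul]
      _ ≤ 3 * nn i := by
          rw [h2]
          nlinarith
  -- main downward induction
  have key : ∀ d, d ≤ r → ∃ ψ : Z → Z,
      Set.InjOn ψ ↑((Finset.Ico (r - d) r).biUnion B) ∧
      ∀ j, r - d ≤ j → j < r → ∀ b ∈ B j, ψ b ∈ G j := by
    intro d
    induction d with
    | zero =>
      intro _
      refine ⟨id, ?_, ?_⟩
      · simp
      · intro j hj hjr; omega
    | succ d ih =>
      intro hd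
      obtain ⟨ψ, hinj, hmem⟩ := ih (Nat.le_of_succ_le hd)
      set i := r - (d + 1) with hi_def
      have hi : i < r := by omega
      have hsucc : r - d = i + 1 := by omega
      rw [hsucc] at hinj hmem
      set U : Finset Z := (Finset.Ico (i+1) r).biUnion B with hU
      set S : Finset Z := U.image ψ with hS
      -- cardinality bounds
      have hL0 : (0:ℝ) < 100 * L := by linarith
      have hScard : (S.card : ℝ) ≤ 3 * nn i / (100 * L) := by
        have h0 : S.card ≤ U.card := Finset.card_image_le
        have h1 : U.card ≤ ∑ j ∈ Finset.Ico (i+1) r, (B j).card :=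
          Finset.card_biUnion_le
        have h2 : (S.card : ℝ) ≤ ∑ j ∈ Finset.Ico (i+1) r, ((B j).card : ℝ) := by
          exact_mod_cast h0.trans h1
        have h3 : ∑ j ∈ Finset.Ico (i+1) r, ((B j).card : ℝ)
            ≤ ∑ j ∈ Finset.Ico (i+1) r, nn j / (100 * L) := by
          refine Finset.sum_le_sum fun j hj => ?_
          rw [Finset.mem_Ico] at hj
          exact hB j hj.2
        have h5 := hsum i hi
        calc (S.card : ℝ) ≤ ∑ j ∈ Finset.Ico (i+1) r, ((B j).card : ℝ) := h2
          _ ≤ ∑ j ∈ Finset.Ico (i+1) r, nn j / (100 * L) := h3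
          _ = (∑ j ∈ Finset.Ico (i+1) r, nn j) / (100 * L) := by
              rw [Finset.sum_div]
          _ ≤ 3 * nn i / (100 * L) := by gcongr
      -- enough room in G i
      have hroom : (B i).card ≤ (G i \ S).card := by
        have hBi := hB i hi
        have hGi := hG i hi
        have hni := hpos i hi
        have hkey : ((B i).card : ℝ) + (S.card : ℝ) ≤ ((G i).card : ℝ) := by
          have h4 : ((B i).card : ℝ) + (S.card : ℝ) ≤ 4 * nn i / (100 * L) := by
            rw [show (4:ℝ) * nn i / (100 * L) = nn i / (100 * L) + 3 * nn i / (100 * L) by ring]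
            exact add_le_add hBi hScard
          have h5 : 4 * nn i / (100 * L) ≤ nn i / 100 := by
            rw [div_le_div_iff₀ hL0 (by norm_num)]
            nlinarith
          linarith
        have h6 : (G i).card ≤ (G i \ S).card + S.card :=
          Finset.card_le_card_sdiff_add_card
        have h7 : ((G i).card : ℝ) ≤ ((G i \ S).card : ℝ) + (S.card : ℝ) := by
          exact_mod_cast h6
        have : ((B i).card : ℝ) ≤ ((G i \ S).card : ℝ) := by linarith
        exact_mod_cast this
      -- get the injection on B i
      have hfin : (↑(B i) : Set Z).Finite := (B i).finite_toSet
      have hle : (↑(B i) : Set Z).encard ≤ (↑(G i \ S) : Set Z).encard := by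
        rw [Set.encard_coe_eq_coe_finsetCard, Set.encard_coe_eq_coe_finsetCard]
        exact_mod_cast hroom
      obtain ⟨f, hfmaps', hfinj⟩ := hfin.exists_injOn_of_encard_le hle
      have hfmaps : ∀ x ∈ B i, f x ∈ G i \ S := fun x hx =>
        Finset.mem_coe.mp (hfmaps' (Finset.mem_coe.mpr hx))
      -- combine
      refine ⟨fun z => if z ∈ B i then f z else ψ z, ?_, ?_⟩
      · -- injectivity
        have hIco : Finset.Ico (r - (d+1)) r = insert i (Finset.Ico (i+1) r) := by
          rw [← hi_def]; exact (Finset.insert_Ico_succ_left_eq_Ico hi).symm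
        rw [hIco, Finset.biUnion_insert]
        have hUB : ∀ x ∈ U, x ∉ B i := by
          intro x hx
          rw [hU, Finset.mem_biUnion] at hx
          obtain ⟨j, hj, hxj⟩ := hx
          rw [Finset.mem_Ico] at hj
          exact fun hxB =>
            (Finset.disjoint_left.mp (hdisj i hi j hj.2 (by omega)) hxB) hxj
        intro x hx y hy hxy
        simp only [Finset.coe_union, Set.mem_union, Finset.mem_coe] at hx hy
        rcases hx with hx | hx <;> rcases hy with hy | hy
        · exact hfinj hx hy (by simpa [hx, hy] using hxy)
        · exfalso
          have hyB : y ∉ B i := hUB y hy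
          have h1 : f x ∈ G i \ S := hfmaps x hx
          have h2 : ψ y ∈ S := Finset.mem_image_of_mem ψ hy
          rw [Finset.mem_sdiff] at h1
          simp only [hx, if_pos, hyB, if_neg, not_false_iff] at hxy
          exact h1.2 (hxy ▸ h2)
        · exfalso
          have hxB : x ∉ B i := hUB x hx
          have h1 : f y ∈ G i \ S := hfmaps y hy
          have h2 : ψ x ∈ S := Finset.mem_image_of_mem ψ hx
          rw [Finset.mem_sdiff] at h1
          simp only [hy, if_pos, hxB, if_neg, not_false_iff] at hxy
          exact h1.2 (hxy ▸ h2)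
        · have hxB : x ∉ B i := hUB x hx
          have hyB : y ∉ B i := hUB y hy
          simp only [hxB, hyB, if_neg, not_false_iff] at hxy
          exact hinj (Finset.mem_coe.mpr hx) (Finset.mem_coe.mpr hy) hxy
      · -- membership
        intro j hj hjr b hb
        rcases eq_or_lt_of_le hj with heq | hlt
        · have hbi : b ∈ B i := heq.symm ▸ hb
          have h1 : f b ∈ G i \ S := hfmaps b hbi
          rw [Finset.mem_sdiff] at h1
          simp only [hbi, if_pos]
          exact heq ▸ h1.1
        · have hbni : b ∉ B i := by
            intro hbB
            exact (Finset.disjoint_left.mp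
              (hdisj i hi j hjr (by omega)) hbB) hb
          simp only [hbni, if_neg, not_false_iff]
          exact hmem j (by omega) hjr b hb
  obtain ⟨ψ, hinj, hmem⟩ := key r le_rfl
  rw [Nat.sub_self] at hinj hmem
  refine ⟨ψ, ?_, fun i hi b hb => hmem i (Nat.zero_le i) hi b hb⟩
  rwa [Finset.range_eq_Ico]
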